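/- Let X be a reflexive Banach space with dual X*, let f: X → ℝ be Fréchet differentiable, and let ψ*: X* → ℝ be Fréchet differentiable. Fix N ≥ 1 and real coefficients {a_{k,i}}_{0≤i<k≤N} and {b_{k,i}}_{0≤i≤k≤N} with b_{0,0} = −1. Define the mirror-dual sequences by: q_0 ∈ X, r_0 = −b_{N,N} ∇f(q_0), and for k = 0, …, N−1: q_{k+1} = q_k − Σ_{i=0}^{k} a_{N−i,N−1−k} ∇ψ*(r_i) and r_{k+1} = r_k − Σ_{i=0}^{k+1} b_{N−i,N−1−k} ∇f(q_i). If Σ_{i=0}^{k+1} b_{k+1,i} = 0 for every k = 0, …, N−1, then r_N = ∇f(q_N). -/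

import Mathlib

open NormedSpace Finset

/-- Let `X` be a reflexive Banach space, `f : X → ℝ` Fréchet
differentiable with gradient `∇f = gradf` (an element of the dual `X*`), and
`ψ* : X* → ℝ` Fréchet differentiable with gradient `∇ψ* = gradPsiStar`
(an element of `X** = X`, identified via the canonical inclusion into the
double dual, which is surjective by reflexivity).  Given coefficients
`a_{k,i}` and `b_{k,i}` with `b 0 0 = -1`, the mirror-dual sequences
`q, r` satisfy `r N = ∇f(q N)` provided each row of `b` sums to zero:
`∑_{i=0}^{k+1} b_{k+1,i} = 0` for `k = 0, …, N-1`. -/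
theorem mirror_dual_final_gradient_identity
    (X : Type*) [NormedAddCommGroup X] [NormedSpace ℝ X] [CompleteSpace X]
    (hrefl : Function.Surjective (inclusionInDoubleDual ℝ X))
    (f : X → ℝ) (gradf : X → StrongDual ℝ X)
    (hf : ∀ x : X, HasFDerivAt f (gradf x) x)
    (psiStar : StrongDual ℝ X → ℝ) (gradPsiStar : StrongDual ℝ X → X)
    (hpsiStar : ∀ u : StrongDual ℝ X,
      HasFDerivAt psiStar (inclusionInDoubleDual ℝ X (gradPsiStar u)) u)
    (N : ℕ) (hN : 1 ≤ N)
    (a b : ℕ → ℕ → ℝ) (hb00 : b 0 0 = -1)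
    (hbrow : ∀ k < N, ∑ i ∈ range (k + 2), b (k + 1) i = 0)
    (q : ℕ → X) (r : ℕ → StrongDual ℝ X)
    (hr0 : r 0 = -(b N N) • gradf (q 0))
    (hq : ∀ k < N, q (k + 1) =
      q k - ∑ i ∈ range (k + 1), a (N - i) (N - 1 - k) • gradPsiStar (r i))
    (hr : ∀ k < N, r (k + 1) =
      r k - ∑ i ∈ range (k + 2), b (N - i) (N - 1 - k) • gradf (q i)) :
    r N = gradf (q N) := by
  have key : ∀ n, n ≤ N → r n = -∑ i ∈ range (n+1),
      (∑ m ∈ Finset.Ico (N - n) (N - i + 1), b (N - i) m) • gradf (q i) := by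
    intro n
    induction n with
    | zero =>
      intro _
      simp [hr0, Nat.Ico_succ_singleton]
      exact neg_smul (b N N) (gradf (q 0))
    | succ n ih =>
      intro hn1
      have hn : n < N := hn1
      have ihn := ih hn.le
      rw [hr n hn, ihn]
      have hlow : N - 1 - n = N - (n+1) := by omega
      have hlow2 : N - (n+1) + 1 = N - n := by omega
      have hext : (∑ i ∈ range (n+1),
            (∑ m ∈ Finset.Ico (N - n) (N - i + 1), b (N - i) m) • gradf (q i))
          = ∑ i ∈ range (n+2),
            (∑ m ∈ Finset.Ico (N - n) (N - i + 1), b (N - i) m) • gradf (q i) := by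
        rw [sum_range_succ _ (n+1)]
        have he : Finset.Ico (N - n) (N - (n+1) + 1) = ∅ := by
          rw [hlow2]; exact Finset.Ico_self _
        rw [he]
        simp
      rw [hext]
      have comb : ∀ (A B : StrongDual ℝ X), -A - B = -(A + B) := by intro A B; abel
      rw [comb, ← Finset.sum_add_distrib]
      congr 1
      refine Finset.sum_congr rfl ?_
      intro i hi
      have hi' : i < n + 2 := Finset.mem_range.mp hi
      rw [← add_smul]
      congr 1
      have hlt : N - (n+1) < N - i + 1 := by omega
      rw [Finset.sum_eq_sum_Ico_succ_bot hlt, hlow2, hlow]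
      ring
  have h := key N le_rfl
  rw [h]
  have hIco : ∀ i : ℕ, Finset.Ico (N - N) (N - i + 1) = range (N - i + 1) := by
    intro i; rw [Nat.sub_self]; ext x; simp
  rw [sum_range_succ]
  have hzero : ∑ i ∈ range N,
      (∑ m ∈ Finset.Ico (N - N) (N - i + 1), b (N - i) m) • gradf (q i) = 0 := by
    refine Finset.sum_eq_zero ?_
    intro i hi
    have hiN : i < N := Finset.mem_range.mp hi
    have hk : N - i - 1 < N := by omega
    have := hbrow (N - i - 1) hk
    have h1 : N - i - 1 + 1 = N - i := by omega
    have h2 : N - i - 1 + 2 = N - i + 1 := by omega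
    rw [h1, h2] at this
    rw [hIco, this, zero_smul]
  rw [hzero, hIco, Nat.sub_self]
  simp [hb00]
  exact (congrArg Neg.neg (neg_one_smul ℝ (gradf (q N)))).trans (neg_neg _)
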